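/- arXiv:0902.0869 — 3 statements merged into one kernel-verified Lean document; each statement's English description precedes it below -/
import Mathlib

section
/- Let G be a group, H ≤ G a subgroup, A ≤ G a normal subgroup with G/A having no proper finite-index subgroups, and ψ : G → ℤ a homomorphism such that ψ(H ∩ A) ≠ 0 and the quotient map q : G → G/A satisfies q(H) = G/A. Then q(ker ψ ∩ H) = G/A. -/
lemma int_subgroup_finiteIndex (K : Subgroup (Multiplicative ℤ)) (hK : K ≠ ⊥) :
    K.FiniteIndex := by
  constructor
  rw [← Subgroup.index_toAddSubgroup]
  obtain ⟨a, ha⟩ := Int.subgroup_cyclic (Subgroup.toAddSubgroup K)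
  have ha' : Subgroup.toAddSubgroup K = AddSubgroup.zmultiples a := by
    rw [ha, AddSubgroup.zmultiples_eq_closure]
  rw [ha']; erw [Int.index_zmultiples]
  intro h
  have ha0 : a = 0 := by omega
  apply hK
  ext x
  simp only [Subgroup.mem_bot]
  constructor
  · intro hx
    have : Multiplicative.toAdd x ∈ Subgroup.toAddSubgroup K := hx
    rw [ha', ha0] at this
    erw [AddSubgroup.mem_zmultiples_iff] at this
    simp only [smul_zero] at this
    obtain ⟨k, hk⟩ := this
    have : Multiplicative.toAdd x = 0 := hk.symm
    exact Multiplicative.toAdd.injective (by simpa using this)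
  · rintro rfl; exact K.one_mem

/-- If `A ⊴ G` with `G/A` having no proper finite-index subgroups,
`ψ : G → ℤ` satisfies `ψ(H ∩ A) ≠ 0`, and `H` surjects onto `G/A`, then
`ker ψ ∩ H` still surjects onto `G/A`. -/
theorem stmt8 {G : Type*} [Group G] (H A : Subgroup G) [A.Normal]
    (hGA : ∀ J : Subgroup (G ⧸ A), J.FiniteIndex → J = ⊤)
    (ψ : G →* Multiplicative ℤ)
    (hψ : Subgroup.map ψ (H ⊓ A) ≠ ⊥)
    (hH : Subgroup.map (QuotientGroup.mk' A) H = ⊤) :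
    Subgroup.map (QuotientGroup.mk' A) (ψ.ker ⊓ H) = ⊤ := by
  set q := QuotientGroup.mk' A with hq
  set K := Subgroup.map ψ (H ⊓ A) with hKdef
  have hKfi : K.FiniteIndex := int_subgroup_finiteIndex K hψ
  set M := Subgroup.comap ψ K with hMdef
  have hMfi : M.FiniteIndex := by
    constructor
    rw [hMdef, Subgroup.index_comap]
    have : (K.subgroupOf ψ.range).FiniteIndex := inferInstance
    exact this.index_ne_zero
  -- the restriction of q to H is surjective
  set f : H →* G ⧸ A := q.comp H.subtype with hf
  have hfsurj : Function.Surjective f := by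
    rw [← MonoidHom.range_eq_top]
    rw [hf, MonoidHom.range_comp, Subgroup.range_subtype, hH]
  set S := M.subgroupOf H with hS
  have hSfi : S.FiniteIndex := inferInstance
  set J := Subgroup.map f S with hJ
  have hJfi : J.FiniteIndex := by
    constructor
    intro h0
    exact hSfi.index_ne_zero (Nat.eq_zero_of_zero_dvd
      (h0 ▸ Subgroup.index_map_dvd S hfsurj))
  have hJtop : J = ⊤ := hGA J hJfi
  rw [eq_top_iff]
  rintro x -
  have hx : x ∈ J := hJtop ▸ Subgroup.mem_top x
  obtain ⟨h, hhS, hhx⟩ := hx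
  have hhM : (h : G) ∈ M := hhS
  obtain ⟨a, haHA, haψ⟩ := hhM
  refine ⟨(h : G) * a⁻¹, Subgroup.mem_inf.mpr ⟨?_, ?_⟩, ?_⟩
  · -- in ker ψ
    rw [MonoidHom.mem_ker, map_mul, map_inv, haψ]
    group
  · exact H.mul_mem h.2 (H.inv_mem haHA.1)
  · have haA : q a = 1 := by
      rw [hq]
      simpa [QuotientGroup.mk'_apply, QuotientGroup.eq_one_iff] using haHA.2
    have : q ((h : G) * a⁻¹) = q h := by
      rw [map_mul, map_inv, haA]; group
    rw [this, ← hhx]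
    rfl
end

section
/- Let p : X̃ → X be a covering of path-connected spaces with X̃ simply connected, let G = π₁(X, x₀) act on X̃ by deck transformations, let S ⊆ X be a path-connected subspace with induced image subgroup Σ ≤ G under the inclusion, and let H ≤ G correspond to a connected cover p_H : X̄ → X. Then the path components of p_H⁻¹(S) are in bijective correspondence with the set of double cosets H \ G / Σ. -/
universe u

open Set

lemma covering_lift_real {E X : Type*} [TopologicalSpace E] [TopologicalSpace X]
    {p : E → X} (hp : IsCoveringMap p) (f : ℝ → X) (hf : Continuous f)
    (e : E) (he : p e = f 0) :
    ∃ g : ℝ → E, Continuous g ∧ g 0 = e ∧ ∀ s ∈ Icc (0:ℝ) 1, p (g s) = f s := by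
  classical
  set P : ℝ → Prop := fun t => ∃ g : ℝ → E, Continuous g ∧ g 0 = e ∧
    ∀ s ∈ Icc (0:ℝ) t, p (g s) = f s with hP
  set T : Set ℝ := {t | t ∈ Icc (0:ℝ) 1 ∧ P t} with hT
  have h0 : (0:ℝ) ∈ T := by
    refine ⟨⟨le_refl 0, zero_le_one⟩, fun _ => e, continuous_const, rfl, ?_⟩
    rintro s hs
    have : s = 0 := le_antisymm hs.2 hs.1
    rw [this, he]
  have hbdd : BddAbove T := ⟨1, fun t ht => ht.1.2⟩
  set t0 := sSup T with ht0
  have ht0mem : t0 ∈ Icc (0:ℝ) 1 :=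
    ⟨le_csSup hbdd h0, csSup_le ⟨0, h0⟩ (fun t ht => ht.1.2)⟩
  have hne : Nonempty ↑(p ⁻¹' {f t0}) := by
    obtain ⟨_, U, hxU, hU, _, H, _⟩ := hp (f t0)
    obtain ⟨ε, hε, hball⟩ := Metric.isOpen_iff.mp (hU.preimage hf) t0 hxU
    obtain ⟨t, ht, htlt⟩ := exists_lt_of_lt_csSup ⟨0, h0⟩ (by linarith : t0 - ε < t0)
    obtain ⟨g, -, -, hgp⟩ := ht.2
    have hgt : p (g t) ∈ U := by
      rw [hgp t ⟨ht.1.1, le_refl t⟩]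
      apply hball
      rw [Metric.mem_ball, Real.dist_eq, abs_lt]
      constructor <;> linarith [le_csSup hbdd ht]
    exact ⟨(H ⟨g t, hgt⟩).2⟩
  set triv := (hp (f t0)).toTrivialization with htriv
  have hbase : f t0 ∈ triv.baseSet := IsEvenlyCovered.mem_toTrivialization_baseSet _
  obtain ⟨ε, hε, hball⟩ := Metric.isOpen_iff.mp (triv.open_baseSet.preimage hf) t0 hbase
  obtain ⟨t, ht, htlt⟩ := exists_lt_of_lt_csSup ⟨0, h0⟩ (by linarith : t0 - ε < t0)
  have htle : t ≤ t0 := le_csSup hbdd ht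
  have ht01 : (0:ℝ) ≤ t := ht.1.1
  obtain ⟨g, hgc, hg0, hgp⟩ := ht.2
  set t1 := min (t0 + ε/2) 1 with ht1
  have htt1 : t ≤ t1 := le_min (by linarith) ht.1.2
  have hUball : ∀ s ∈ Icc t t1, f s ∈ triv.baseSet := by
    intro s hs
    apply hball
    rw [Metric.mem_ball, Real.dist_eq, abs_lt]
    have h1 : s ≤ t0 + ε/2 := le_trans hs.2 (min_le_left _ _)
    constructor <;> [linarith [hs.1]; linarith]
  have hgtU : f t ∈ triv.baseSet := hUball t ⟨le_refl t, htt1⟩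
  have hgt_src : g t ∈ triv.source := by
    rw [triv.mem_source, hgp t ⟨ht01, le_refl t⟩]; exact hgtU
  set i := (triv (g t)).2 with hi
  set c2 : ℝ → ℝ := fun s => min (max s t) t1 with hc2
  have hc2mem : ∀ s, c2 s ∈ Icc t t1 := fun s => ⟨le_min (le_max_right _ _) htt1, min_le_right _ _⟩
  set h2 : ℝ → E := fun s => triv.toPartialHomeomorph.symm (f (c2 s), i) with hh2
  have hc2cont : Continuous c2 := by fun_prop
  have hh2cont : Continuous h2 := by
    apply triv.toPartialHomeomorph.continuousOn_symm.comp_continuous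
      (by fun_prop)
    intro s
    rw [Bundle.Trivialization.mem_target]
    exact hUball _ (hc2mem s)
  have hh2p : ∀ s, p (h2 s) = f (c2 s) := fun s =>
    triv.proj_symm_apply' (hUball _ (hc2mem s))
  have hh2t : h2 t = g t := by
    have hc2t : c2 t = t := by
      rw [hc2]; simp only [max_self]; exact min_eq_left htt1
    have : (f (c2 t), i) = triv (g t) := by
      rw [hc2t]
      exact Prod.ext (by rw [triv.coe_fst hgt_src, hgp t ⟨ht01, le_refl t⟩]) rfl
    rw [hh2]; simp only [this]
    exact triv.toPartialHomeomorph.left_inv hgt_src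
  set g1 : ℝ → E := fun s => if s ≤ t then g s else h2 s with hg1
  have hg1c : Continuous g1 := by
    apply Continuous.if_le hgc hh2cont continuous_id continuous_const
    intro x hx
    simp only [id_eq] at hx
    rw [hx, hh2t]
  have ht1T : t1 ∈ T := by
    refine ⟨⟨le_trans ht01 htt1, min_le_right _ _⟩, g1, hg1c, ?_, ?_⟩
    · rw [hg1]; simp only [if_pos ht01]; exact hg0
    · intro s hs
      rw [hg1]
      by_cases hst : s ≤ t
      · simp only [if_pos hst]; exact hgp s ⟨hs.1, hst⟩
      · push_neg at hst
        simp only [if_neg (not_le.mpr hst)]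
        rw [hh2p s]
        congr 1
        show (s ⊔ t) ⊓ t1 = s
        rw [max_eq_left (le_of_lt hst), min_eq_left hs.2]
  have ht1le : t1 ≤ t0 := le_csSup hbdd ht1T
  have h1t : t1 = 1 := by
    rcases le_or_gt (t0 + ε/2) 1 with h | h
    · exfalso
      have : t1 = t0 + ε/2 := min_eq_left h
      linarith
    · exact min_eq_right (le_of_lt h)
  obtain ⟨g2, hg2c, hg20, hg2p⟩ := ht1T.2
  exact ⟨g2, hg2c, hg20, by rw [← h1t]; exact hg2p⟩


lemma covering_lift_joinedIn {E X : Type*} [TopologicalSpace E] [TopologicalSpace X]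
    {p : E → X} (hp : IsCoveringMap p) {S : Set X} {x y : X}
    (γ : Path x y) (hγ : ∀ t, γ t ∈ S) (e : E) (he : p e = x) :
    ∃ e' : E, p e' = y ∧ JoinedIn (p ⁻¹' S) e e' := by
  obtain ⟨g, hgc, hg0, hgp⟩ := covering_lift_real hp γ.extend γ.continuous_extend e
    (by rwa [Path.extend_zero])
  have hmem : ∀ t : unitInterval, g t ∈ p ⁻¹' S := by
    intro t
    have := hgp t ⟨t.2.1, t.2.2⟩
    rw [Set.mem_preimage, this, γ.extend_extends' t]
    exact hγ _
  have h1 : p (g 1) = y := by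
    have := hgp 1 ⟨zero_le_one, le_refl 1⟩
    rwa [Path.extend_one] at this
  refine ⟨g 1, h1, ?_⟩
  refine ⟨⟨⟨fun t => g t, hgc.comp continuous_subtype_val⟩, ?_, ?_⟩, fun t => hmem t⟩
  · show g ((0 : unitInterval) : ℝ) = e; rw [Set.Icc.coe_zero, hg0]
  · show g ((1 : unitInterval) : ℝ) = g 1; rw [Set.Icc.coe_one]


/-- Let `p : X̃ → X` be a universal cover with deck group `G` acting simply
transitively on fibers, `S ⊆ X` a path-connected subset containing the base
point, `Σ ≤ G` the subgroup corresponding to the image of `π₁(S)` (characterized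
by joinability inside `p⁻¹(S)`), and `p_H = q : X̄ → X` the connected cover
associated to a subgroup `H ≤ G` (obtained as quotient `ψ : X̃ → X̄` by the
`H`-action). Then the path components of `q⁻¹(S)` are in bijection with the
double cosets `H \ G / Σ`. -/
theorem stmt12 {X Xt Xb : Type u} [TopologicalSpace X] [TopologicalSpace Xt]
    [TopologicalSpace Xb]
    [PathConnectedSpace X] [PathConnectedSpace Xt] [SimplyConnectedSpace Xt]
    {G : Type u} [Group G] [MulAction G Xt] [ContinuousConstSMul G Xt]
    (p : Xt → X) (hp : IsCoveringMap p)
    (hdeck : ∀ (g : G) (x : Xt), p (g • x) = p x)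
    (htrans : ∀ x y : Xt, p x = p y → ∃! g : G, g • x = y)
    (x0 : X) (xt : Xt) (hxt : p xt = x0)
    (S : Set X) (hS : IsPathConnected S) (hx0S : x0 ∈ S)
    (Sg : Subgroup G)
    (hSg : ∀ g : G, g ∈ Sg ↔ JoinedIn (p ⁻¹' S) (g • xt) xt)
    (H : Subgroup G)
    (ψ : Xt → Xb) (hψ : IsCoveringMap ψ) (hψs : Function.Surjective ψ)
    (q : Xb → X) (hq : IsCoveringMap q) (hqψ : ∀ x, q (ψ x) = p x)
    (hψH : ∀ x y : Xt, ψ x = ψ y ↔ ∃ h ∈ H, h • x = y) :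
    Nonempty (ZerothHomotopy (q ⁻¹' S) ≃ DoubleCoset.Quotient (H : Set G) (Sg : Set G)) := by
  classical
  -- basic membership
  have hmem : ∀ g : G, ψ (g • xt) ∈ q ⁻¹' S := by
    intro g
    rw [Set.mem_preimage, hqψ, hdeck, hxt]
    exact hx0S
  set A : G → ↥(q ⁻¹' S) := fun g => ⟨ψ (g • xt), hmem g⟩ with hA
  -- mapping JoinedIn through the group action
  have hsmul : ∀ (g : G) {a b : Xt}, JoinedIn (p ⁻¹' S) a b →
      JoinedIn (p ⁻¹' S) (g • a) (g • b) := by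
    rintro g a b ⟨γ, hγ⟩
    refine ⟨γ.map (continuous_const_smul g), fun t => ?_⟩
    simp only [Path.map_coe, Function.comp_apply, Set.mem_preimage, hdeck]
    exact hγ t
  -- mapping JoinedIn through ψ
  have hpsi : ∀ {a b : Xt}, JoinedIn (p ⁻¹' S) a b →
      JoinedIn (q ⁻¹' S) (ψ a) (ψ b) := by
    rintro a b ⟨γ, hγ⟩
    refine ⟨γ.map hψ.continuous, fun t => ?_⟩
    simp only [Path.map_coe, Function.comp_apply, Set.mem_preimage, hqψ]
    exact hγ t
  -- preimage identification
  have hpre : ψ ⁻¹' (q ⁻¹' S) = p ⁻¹' S := by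
    ext z
    simp [Set.mem_preimage, hqψ]
  -- key lemma, direction ⇐
  have key2 : ∀ g₁ g₂ : G, (∃ h ∈ H, ∃ σ ∈ Sg, g₂ = h * g₁ * σ) →
      Joined (A g₁) (A g₂) := by
    rintro g₁ g₂ ⟨h, hh, σ, hσ, rfl⟩
    have j1 : JoinedIn (p ⁻¹' S) (σ • xt) xt := (hSg σ).mp hσ
    have j2 : JoinedIn (p ⁻¹' S) ((g₁ * σ) • xt) (g₁ • xt) := by
      have := hsmul g₁ j1
      rwa [smul_smul] at this
    have j3 : JoinedIn (q ⁻¹' S) (ψ ((g₁ * σ) • xt)) (ψ (g₁ • xt)) := hpsi j2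
    have heq : ψ ((g₁ * σ) • xt) = ψ ((h * g₁ * σ) • xt) := by
      rw [hψH]
      exact ⟨h, hh, by rw [smul_smul, mul_assoc]⟩
    rw [heq] at j3
    exact (j3.joined_subtype.symm : Joined (A g₁) _)
  -- key lemma, direction ⇒
  have key1 : ∀ g₁ g₂ : G, Joined (A g₁) (A g₂) →
      (∃ h ∈ H, ∃ σ ∈ Sg, g₂ = h * g₁ * σ) := by
    intro g₁ g₂ hj
    have hj' : JoinedIn (q ⁻¹' S) (ψ (g₁ • xt)) (ψ (g₂ • xt)) :=
      (joinedIn_iff_joined (hmem g₁) (hmem g₂)).mpr hj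
    obtain ⟨γ, hγ⟩ := hj'
    obtain ⟨e', he', hje⟩ := covering_lift_joinedIn hψ γ hγ (g₁ • xt) rfl
    rw [hpre] at hje
    obtain ⟨h, hh, hhe⟩ := (hψH e' (g₂ • xt)).mp he'
    -- e' = h⁻¹ • (g₂ • xt) = (h⁻¹ * g₂) • xt
    have he'' : e' = (h⁻¹ * g₂) • xt := by
      rw [mul_smul]
      exact (inv_smul_eq_iff.mpr hhe.symm).symm
    rw [he''] at hje
    -- translate by g₁⁻¹
    have hje2 : JoinedIn (p ⁻¹' S) ((g₁⁻¹ * (h⁻¹ * g₂)) • xt) xt := by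
      have := (hsmul g₁⁻¹ hje).symm
      rwa [smul_smul, smul_smul, inv_mul_cancel, one_smul] at this
    have hσ : g₁⁻¹ * (h⁻¹ * g₂) ∈ Sg := (hSg _).mpr hje2
    refine ⟨h, hh, g₁⁻¹ * (h⁻¹ * g₂), hσ, ?_⟩
    group
  -- the map from double cosets to path components
  set F : DoubleCoset.Quotient (H : Set G) (Sg : Set G) → ZerothHomotopy (q ⁻¹' S) :=
    Quotient.lift (fun g => (⟦A g⟧ : ZerothHomotopy (q ⁻¹' S)))
      (by
        intro a b hab
        have := (DoubleCoset.rel_iff (H := H) (K := Sg)).mp hab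
        exact Quotient.sound (key2 a b this)) with hF
  have hFmk : ∀ g : G, F (DoubleCoset.mk H Sg g) = ⟦A g⟧ := fun g => rfl
  have hinj : Function.Injective F := by
    intro a b hab
    induction a using Quotient.inductionOn' with
    | h a =>
    induction b using Quotient.inductionOn' with
    | h b =>
    have : (⟦A a⟧ : ZerothHomotopy (q ⁻¹' S)) = ⟦A b⟧ := hab
    have hj := Quotient.exact this
    exact Quotient.sound' ((DoubleCoset.rel_iff (H := H) (K := Sg)).mpr (key1 a b hj))
  have hsurj : Function.Surjective F := by
    intro z
    induction z using Quotient.inductionOn' with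
    | h b =>
    obtain ⟨x, hx⟩ := hψs b.1
    have hpx : p x ∈ S := by
      have hb2 := b.2
      rw [Set.mem_preimage, ← hx, hqψ] at hb2
      exact hb2
    obtain ⟨γ, hγ⟩ := hS.joinedIn (p x) hpx x0 hx0S
    obtain ⟨e', he', hje⟩ := covering_lift_joinedIn hp γ hγ x rfl
    obtain ⟨k, hk, _⟩ := htrans xt e' (by rw [hxt, he'])
    refine ⟨DoubleCoset.mk H Sg k, ?_⟩
    rw [hFmk]
    have hjq : JoinedIn (q ⁻¹' S) (ψ (k • xt)) b.1 := by
      rw [← hx, hk]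
      exact (hpsi hje).symm
    have hjoined := (joinedIn_iff_joined (hmem k) b.2).mp hjq
    exact Quotient.sound hjoined
  exact ⟨(Equiv.ofBijective F ⟨hinj, hsurj⟩).symm⟩
end

section
/- Let φ : G → A × K be a group homomorphism where A is a finitely generated abelian group and K is any group, let pr_K : A × K → K and pr_A : A × K → A be the projections, and suppose H ≤ G satisfies: pr_K ∘ φ restricted to H is surjective onto K, K has no proper finite-index subgroups, and the kernel F of pr_K ∘ φ|_H satisfies pr_A(φ(F)) = 0. Then pr_A(φ(H)) = 0, i.e. φ(H) is contained in 0 × K. -/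
/-- Residual finiteness of finitely generated abelian groups (additive form):
any nonzero element is detected by a homomorphism to some nontrivial `ZMod m`. -/
lemma resfin_add {A : Type*} [AddCommGroup A] [AddGroup.FG A] (a : A) (ha : a ≠ 0) :
    ∃ (m : ℕ) (f : A →+ ZMod m), m ≠ 0 ∧ f a ≠ 0 := by
  classical
  obtain ⟨n, ι, fι, p, hp, e, ⟨eqv⟩⟩ := AddCommGroup.equiv_free_prod_directSum_zmod A
  have hx : eqv a ≠ 0 := by
    intro h
    exact ha (by simpa using congrArg eqv.symm h)
  by_cases h2 : (eqv a).2 = 0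
  · -- the free part is nonzero
    have h1 : (eqv a).1 ≠ 0 := by
      intro h1
      exact hx (Prod.ext h1 h2)
    obtain ⟨i, hi⟩ : ∃ i, (eqv a).1 i ≠ 0 := by
      by_contra hcon
      push_neg at hcon
      exact h1 (Finsupp.ext hcon)
    set c : ℤ := (eqv a).1 i with hc
    refine ⟨c.natAbs + 1,
      ((Int.castAddHom (ZMod (c.natAbs + 1))).comp
        ((Finsupp.applyAddHom i).comp
          ((AddMonoidHom.fst _ _).comp eqv.toAddMonoidHom))), by simp, ?_⟩
    simp only [AddMonoidHom.comp_apply, AddEquiv.coe_toAddMonoidHom,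
      AddMonoidHom.coe_fst, Finsupp.applyAddHom_apply, Int.coe_castAddHom]
    intro hzero
    rw [ZMod.intCast_zmod_eq_zero_iff_dvd] at hzero
    have hdvd : (c.natAbs + 1) ∣ c.natAbs := by
      have h' := Int.natAbs_dvd_natAbs.mpr hzero
      rwa [Int.natAbs_natCast] at h'
    have hpos : 0 < c.natAbs := Int.natAbs_pos.mpr hi
    have := Nat.le_of_dvd hpos hdvd
    omega
  · -- the torsion part is nonzero
    obtain ⟨i, hi⟩ : ∃ i, (eqv a).2 i ≠ 0 := by
      by_contra hcon
      push_neg at hcon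
      exact h2 (DFinsupp.ext hcon)
    refine ⟨p i ^ e i,
      ((DFinsupp.evalAddMonoidHom i).comp
        ((AddMonoidHom.snd _ _).comp eqv.toAddMonoidHom)), ?_, ?_⟩
    · exact pow_ne_zero _ (hp i).pos.ne'
    · simpa using (show ((DFinsupp.evalAddMonoidHom i) (eqv a).2 ≠ 0) from hi)

/-- Let `φ : G → A × K` with `A` finitely generated abelian and `K` without
proper finite-index subgroups. If `H ≤ G` maps onto `K` under `pr_K ∘ φ` and
the kernel `F` of this map on `H` satisfies `pr_A(φ(F)) = 1`, then
`pr_A(φ(H)) = 1`, i.e. `φ(H) ⊆ 1 × K`. -/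
theorem stmt18 {G A K : Type*} [Group G] [CommGroup A] [Group.FG A] [Group K]
    (φ : G →* A × K)
    (hK : ∀ J : Subgroup K, J.FiniteIndex → J = ⊤)
    (H : Subgroup G)
    (hsurj : ∀ k : K, ∃ h ∈ H, (φ h).2 = k)
    (hF : ∀ g ∈ H, (φ g).2 = 1 → (φ g).1 = 1) :
    ∀ g ∈ H, (φ g).1 = 1 := by
  classical
  -- well-definedness of the induced map K → A
  have welldef : ∀ h₁ h₂, h₁ ∈ H → h₂ ∈ H → (φ h₁).2 = (φ h₂).2 →
      (φ h₁).1 = (φ h₂).1 := by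
    intro h₁ h₂ m₁ m₂ heq
    have hmem : h₁ * h₂⁻¹ ∈ H := H.mul_mem m₁ (H.inv_mem m₂)
    have h2 : (φ (h₁ * h₂⁻¹)).2 = 1 := by
      simp [map_mul, map_inv, heq]
    have h1 := hF _ hmem h2
    have : (φ h₁).1 * ((φ h₂).1)⁻¹ = 1 := by
      simpa [map_mul, map_inv] using h1
    exact mul_inv_eq_one.mp this
  have hsurj' : ∀ k : K, ∃ h, h ∈ H ∧ (φ h).2 = k := by
    intro k; obtain ⟨h, hh, he⟩ := hsurj k; exact ⟨h, hh, he⟩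
  -- the induced homomorphism f : K →* A
  let ch : K → G := fun k => Classical.choose (hsurj' k)
  have ch_mem : ∀ k, ch k ∈ H := fun k => (Classical.choose_spec (hsurj' k)).1
  have ch_val : ∀ k, (φ (ch k)).2 = k := fun k => (Classical.choose_spec (hsurj' k)).2
  let f : K →* A := MonoidHom.mk' (fun k => (φ (ch k)).1) (by
    intro k₁ k₂
    show (φ (ch (k₁ * k₂))).1 = (φ (ch k₁)).1 * (φ (ch k₂)).1
    have : (φ (ch (k₁ * k₂))).1 = (φ (ch k₁ * ch k₂)).1 := by
      apply welldef _ _ (ch_mem _) (H.mul_mem (ch_mem k₁) (ch_mem k₂))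
      simp [map_mul, ch_val]
    rw [this, map_mul, Prod.fst_mul])
  -- f is trivial
  have ftriv : ∀ k, f k = 1 := by
    intro k
    by_contra hne
    obtain ⟨m, ψ, hm, hψ⟩ := resfin_add (Additive.ofMul (f k)) (by
      simpa using hne)
    haveI : NeZero m := ⟨hm⟩
    -- composite homomorphism K →* Multiplicative (ZMod m)
    let χ : K →* Multiplicative (ZMod m) := MonoidHom.mk'
      (fun k' => Multiplicative.ofAdd (ψ (Additive.ofMul (f k')))) (by
        intro k₁ k₂
        show Multiplicative.ofAdd (ψ (Additive.ofMul (f (k₁ * k₂)))) =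
          Multiplicative.ofAdd (ψ (Additive.ofMul (f k₁))) *
          Multiplicative.ofAdd (ψ (Additive.ofMul (f k₂)))
        have : Additive.ofMul (f (k₁ * k₂)) =
            Additive.ofMul (f k₁) + Additive.ofMul (f k₂) := by
          simp [map_mul]
        rw [this, map_add]
        rfl)
    haveI : Finite (Multiplicative (ZMod m)) := by
      have : Finite (ZMod m) := by infer_instance
      exact this
    haveI : Finite χ.range := Subtype.finite
    have := hK χ.ker inferInstance
    have hmem : k ∈ χ.ker := this ▸ Subgroup.mem_top k
    have : ψ (Additive.ofMul (f k)) = 0 := by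
      have := MonoidHom.mem_ker.mp hmem
      simpa [χ] using this
    exact hψ this
  intro g hg
  have : (φ g).1 = f ((φ g).2) := by
    apply welldef _ _ hg (ch_mem _)
    exact (ch_val _).symm
  rw [this, ftriv]
end
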